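/- Khintchine's transference principle (one direction): Let x ∈ R^d with d ≥ 1. If ω_D(x) > 0, where ω_D(x) = sup{ω > 0 : ‖⟨n,x⟩‖ ≤ |n|_∞^{−(d+ω)} for infinitely many n ∈ Z^d \ {0}}, then ω_S(x) > 0, where ω_S(x) = sup{ω > 0 : ‖qx‖ ≤ q^{−(1+ω)/d} for infinitely many q ∈ N}. More precisely, ω_S(x) ≥ ω_D(x)/(d² + (d−1)ω_D(x)). -/

import Mathlib

open scoped Classical ENNReal

/-- Sup-norm distance from `x ∈ ℝ^d` to the nearest integer point of `ℤ^d`. -/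
noncomputable def distInt {l : ℕ} (x : Fin l → ℝ) : ℝ :=
  ⨅ p : Fin l → ℤ, ‖x - fun i => (p i : ℝ)‖

/-- Distance from `t ∈ ℝ` to the nearest integer. -/
noncomputable def distZ (t : ℝ) : ℝ := ⨅ p : ℤ, |t - (p : ℝ)|

/-- `ω_D(x) = sup {ω > 0 : ‖⟨n,x⟩‖ ≤ |n|_∞^{-(d+ω)} for infinitely many n ∈ ℤ^d \ {0}}`,
valued in `ℝ≥0∞` (sup of the empty set is `0`, unbounded sets give `∞`). -/
noncomputable def omegaD {d : ℕ} (x : Fin d → ℝ) : ℝ≥0∞ :=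
  ⨆ ω ∈ {ω : ℝ | 0 < ω ∧
    {n : Fin d → ℤ | n ≠ 0 ∧
      distZ (∑ i, (n i : ℝ) * x i) ≤ ‖fun i => ((n i : ℝ))‖ ^ (-((d : ℝ) + ω))}.Infinite},
    ENNReal.ofReal ω

/-- `ω_S(x) = sup {ω > 0 : ‖qx‖ ≤ q^{-(1+ω)/d} for infinitely many q ∈ ℕ}`. -/
noncomputable def omegaS {d : ℕ} (x : Fin d → ℝ) : ℝ≥0∞ :=
  ⨆ ω ∈ {ω : ℝ | 0 < ω ∧
    {q : ℕ | 0 < q ∧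
      distInt (fun i => (q : ℝ) * x i) ≤ (q : ℝ) ^ (-((1 + ω) / d))}.Infinite},
    ENNReal.ofReal ω

lemma distInt_le {l : ℕ} (x : Fin l → ℝ) (p : Fin l → ℤ) :
    distInt x ≤ ‖x - fun i => (p i : ℝ)‖ := by
  refine ciInf_le ⟨0, ?_⟩ p
  rintro _ ⟨q, rfl⟩; positivity

lemma distZ_eq (t : ℝ) : distZ t = |t - (round t : ℝ)| := by
  refine le_antisymm (ciInf_le ⟨0, by rintro _ ⟨q, rfl⟩; positivity⟩ _) (le_ciInf fun p => ?_)
  by_contra hlt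
  push_neg at hlt
  have h1 : |t - (round t : ℝ)| ≤ 1 / 2 := by
    simpa using abs_sub_round (α := ℝ) t
  have h2 : |(p : ℝ) - round t| < 1 := by
    have := abs_sub_abs_le_abs_sub (t - (p:ℝ)) (t - (round t : ℝ))
    have h3 : |(p:ℝ) - round t| ≤ |t - p| + |t - round t| := by
      have := abs_sub (t - (p:ℝ)) (t - (round t:ℝ))
      calc |(p:ℝ) - round t| = |(t - round t) - (t - p)| := by ring_nf
        _ ≤ |t - (round t:ℝ)| + |t - (p:ℝ)| := abs_sub _ _
        _ ≤ |t - (p:ℝ)| + |t - (round t:ℝ)| := by linarith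
    linarith
  have : p = round t := by
    have : |p - round t| < 1 := by exact_mod_cast (by push_cast; simpa using h2 : |((p - round t : ℤ) : ℝ)| < 1)
    have := abs_lt.1 this
    omega
  rw [this] at hlt; linarith

lemma distInt_eq {l : ℕ} (x : Fin l → ℝ) :
    distInt x = ‖x - fun i => ((round (x i) : ℤ) : ℝ)‖ := by
  refine le_antisymm (distInt_le x _) (le_ciInf fun p => ?_)
  rcases Nat.eq_zero_or_pos l with rfl | hl
  · have : (x - fun i => ((round (x i) : ℤ) : ℝ)) = 0 := by ext i; exact absurd i.2 (by simp)
    simp [this]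
  refine (pi_norm_le_iff_of_nonneg (norm_nonneg _)).2 fun i => ?_
  calc ‖(x - fun i => ((round (x i) : ℤ) : ℝ)) i‖ = |x i - (round (x i) : ℝ)| := rfl
    _ = distZ (x i) := (distZ_eq _).symm
    _ ≤ |x i - (p i : ℝ)| := ciInf_le ⟨0, by rintro _ ⟨q, rfl⟩; positivity⟩ _
    _ = ‖(x - fun i => ((p i : ℤ) : ℝ)) i‖ := rfl
    _ ≤ _ := norm_le_pi_norm _ i

lemma distInt_nonneg {l : ℕ} (x : Fin l → ℝ) : 0 ≤ distInt x := by
  rw [distInt_eq]; exact norm_nonneg _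

lemma floor_box_close {m : ℕ} (hm : 0 < m) {u v : ℝ} (hu : 0 ≤ u) (hv : 0 ≤ v)
    (h : ⌊(m : ℝ) * u⌋₊ = ⌊(m : ℝ) * v⌋₊) : |u - v| ≤ 1 / m := by
  have hm' : (0 : ℝ) < m := by exact_mod_cast hm
  have h1 : (⌊(m : ℝ) * u⌋₊ : ℝ) ≤ (m : ℝ) * u := Nat.floor_le (by positivity)
  have h2 : (⌊(m : ℝ) * v⌋₊ : ℝ) ≤ (m : ℝ) * v := Nat.floor_le (by positivity)
  have h3 : (m : ℝ) * u < ⌊(m : ℝ) * u⌋₊ + 1 := Nat.lt_floor_add_one _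
  have h4 : (m : ℝ) * v < ⌊(m : ℝ) * v⌋₊ + 1 := Nat.lt_floor_add_one _
  have e : (⌊(m : ℝ) * u⌋₊ : ℝ) = (⌊(m : ℝ) * v⌋₊ : ℝ) := by exact_mod_cast h
  have key : |(m : ℝ) * u - (m : ℝ) * v| ≤ 1 := by
    rw [abs_le]; constructor <;> linarith
  have : |u - v| * m ≤ 1 := by
    calc |u - v| * m = |u - v| * |(m : ℝ)| := by rw [abs_of_pos hm']
      _ = |(u - v) * m| := (abs_mul _ _).symm
      _ = |(m : ℝ) * u - (m : ℝ) * v| := by ring_nf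
      _ ≤ 1 := key
  rw [le_div_iff₀ hm']
  exact this

lemma pigeon {d : ℕ} (x : Fin d → ℝ) (a : Fin d → ℤ) (j : Fin d) (haj : a j ≠ 0)
    (m M : ℕ) (hm : 0 < m) (hM : 0 < M) :
    ∃ (q : ℕ) (p : Fin d → ℤ), 1 ≤ q ∧ q ≤ m ^ (d - 1) * M ∧
      (∀ i, i ≠ j → |(q : ℝ) * x i - p i| ≤ 1 / m) ∧
      |(q : ℝ) * (∑ i, (a i : ℝ) * x i) - ∑ i, (a i : ℝ) * p i| ≤ |(a j : ℝ)| / M := by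
  classical
  set S : ℝ := ∑ i, (a i : ℝ) * x i with hS
  set y : ℕ → ℝ := fun t =>
    ((t : ℝ) * S - ∑ i ∈ Finset.univ.erase j, (a i : ℝ) * ⌊(t : ℝ) * x i⌋) / (a j : ℝ) with hy
  have haj' : ((a j : ℝ)) ≠ 0 := by exact_mod_cast haj
  have hm' : (0 : ℝ) < m := by exact_mod_cast hm
  have hM' : (0 : ℝ) < M := by exact_mod_cast hM
  set N : ℕ := m ^ (d - 1) * M with hN
  have hbox1 : ∀ (t : ℕ) (i : Fin d), ⌊(m : ℝ) * Int.fract ((t : ℝ) * x i)⌋₊ < m := by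
    intro t i
    refine (Nat.floor_lt (mul_nonneg (Nat.cast_nonneg m) (Int.fract_nonneg _))).2 ?_
    nlinarith [Int.fract_lt_one ((t : ℝ) * x i)]
  have hbox2 : ∀ t : ℕ, ⌊(M : ℝ) * Int.fract (y t)⌋₊ < M := by
    intro t
    refine (Nat.floor_lt (mul_nonneg (Nat.cast_nonneg M) (Int.fract_nonneg _))).2 ?_
    nlinarith [Int.fract_lt_one (y t)]
  set F : Fin (N + 1) → ({i : Fin d // i ≠ j} → Fin m) × Fin M := fun t =>
    (fun i => ⟨⌊(m : ℝ) * Int.fract ((t : ℝ) * x i.1)⌋₊, hbox1 t i.1⟩,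
     ⟨⌊(M : ℝ) * Int.fract (y t)⌋₊, hbox2 t⟩) with hF
  have hcard : Fintype.card (({i : Fin d // i ≠ j} → Fin m) × Fin M) < Fintype.card (Fin (N + 1)) := by
    rw [Fintype.card_prod, Fintype.card_fun, Fintype.card_fin, Fintype.card_fin,
      Fintype.card_fin]
    have : Fintype.card {i : Fin d // i ≠ j} = d - 1 := by
      rw [Fintype.card_subtype_compl, Fintype.card_subtype_eq, Fintype.card_fin]
    rw [this]
    omega
  obtain ⟨t1, t2, hne, heq⟩ := Fintype.exists_ne_map_eq_of_card_lt F hcard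
  wlog hlt : (t1 : ℕ) < (t2 : ℕ) generalizing t1 t2
  · exact this t2 t1 hne.symm heq.symm (by omega)
  set q : ℕ := (t2 : ℕ) - (t1 : ℕ) with hq
  have hqR : (q : ℝ) = ((t2 : ℕ) : ℝ) - ((t1 : ℕ) : ℝ) := by
    rw [hq, Nat.cast_sub hlt.le]
  set p0 : Fin d → ℤ := fun i => ⌊((t2 : ℕ) : ℝ) * x i⌋ - ⌊((t1 : ℕ) : ℝ) * x i⌋ with hp0
  set k : ℤ := ⌊y t2⌋ - ⌊y t1⌋ with hk
  set p : Fin d → ℤ := fun i => if i = j then k else p0 i with hp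
  have key1 : ∀ i, i ≠ j → |(q : ℝ) * x i - p i| ≤ 1 / m := by
    intro i hij
    have hfr := congrFun (congrArg Prod.fst heq) ⟨i, hij⟩
    have h0 : |Int.fract (((t1 : ℕ) : ℝ) * x i) - Int.fract (((t2 : ℕ) : ℝ) * x i)| ≤ 1 / m :=
      floor_box_close hm (Int.fract_nonneg _) (Int.fract_nonneg _)
        (by simpa using congrArg Fin.val hfr)
    rw [Int.fract, Int.fract] at h0
    have h1 : |(q : ℝ) * x i - p0 i| ≤ 1 / m := by
      rw [hqR]
      push_cast [hp0]
      rw [abs_sub_comm] at h0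
      convert h0 using 2
      ring
    simpa [hp, hij] using h1
  refine ⟨q, p, by omega, by omega, key1, ?_⟩
  have hfr := congrArg (fun z => ((Prod.snd z : Fin M) : ℕ)) heq
  have hclose : |Int.fract (y t1) - Int.fract (y t2)| ≤ 1 / M :=
    floor_box_close hM (Int.fract_nonneg _) (Int.fract_nonneg _) (by simpa using hfr)
  rw [Int.fract, Int.fract] at hclose
  have hdiff : y t2 - y t1
      = ((q : ℝ) * S - ∑ i ∈ Finset.univ.erase j, (a i : ℝ) * p0 i) / (a j : ℝ) := by
    have hsplit : ∑ i ∈ Finset.univ.erase j, (a i : ℝ) * p0 i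
        = (∑ i ∈ Finset.univ.erase j, (a i : ℝ) * ⌊((t2 : ℕ) : ℝ) * x i⌋)
          - ∑ i ∈ Finset.univ.erase j, (a i : ℝ) * ⌊((t1 : ℕ) : ℝ) * x i⌋ := by
      rw [← Finset.sum_sub_distrib]
      refine Finset.sum_congr rfl fun i _ => ?_
      rw [hp0]; push_cast; ring
    rw [hsplit, hqR]
    simp only [hy]
    field_simp
    ring
  have hsum : (∑ i, (a i : ℝ) * p i)
      = (∑ i ∈ Finset.univ.erase j, (a i : ℝ) * p0 i) + (a j : ℝ) * k := by
    rw [← Finset.sum_erase_add _ _ (Finset.mem_univ j)]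
    congr 1
    · refine Finset.sum_congr rfl fun i hi => ?_
      rw [hp]; simp [Finset.mem_erase.1 hi |>.1]
    · rw [hp]; simp
  have habs : |(q : ℝ) * S - ∑ i, (a i : ℝ) * p i| = |(a j : ℝ)| * |y t2 - y t1 - k| := by
    rw [← abs_mul]
    congr 1
    rw [hdiff, hsum]
    field_simp
    ring
  rw [habs]
  have hcl2 : |y t2 - y t1 - k| ≤ 1 / M := by
    have e : y t1 - (⌊y t1⌋ : ℝ) - (y t2 - (⌊y t2⌋ : ℝ)) = -(y t2 - y t1 - k) := by
      rw [hk]; push_cast; ring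
    rw [e, abs_neg] at hclose
    exact hclose
  calc |(a j : ℝ)| * |y t2 - y t1 - k| ≤ |(a j : ℝ)| * (1 / M) :=
        mul_le_mul_of_nonneg_left hcl2 (abs_nonneg _)
    _ = |(a j : ℝ)| / M := by ring

lemma exists_max_coord {d : ℕ} (hd : 1 ≤ d) (n : Fin d → ℤ) (hn : n ≠ 0) :
    ∃ j, (∀ i, |(n i : ℝ)| ≤ |(n j : ℝ)|) ∧ ‖(fun i => (n i : ℝ))‖ = |(n j : ℝ)|
      ∧ n j ≠ 0 ∧ 1 ≤ |(n j : ℝ)| := by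
  have : Nonempty (Fin d) := Fin.pos_iff_nonempty.1 (by omega)
  obtain ⟨j, -, hj⟩ := Finset.exists_max_image Finset.univ (fun i => |(n i : ℝ)|)
    ⟨Classical.arbitrary (Fin d), Finset.mem_univ _⟩
  have hmax : ∀ i, |(n i : ℝ)| ≤ |(n j : ℝ)| := fun i => hj i (Finset.mem_univ i)
  obtain ⟨i0, hi0⟩ : ∃ i, n i ≠ 0 := by
    by_contra hc; push_neg at hc; exact hn (funext hc)
  have h1 : (1 : ℝ) ≤ |(n i0 : ℝ)| := by
    rw [← Int.cast_abs]
    exact_mod_cast Int.one_le_abs hi0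
  have h1j : (1 : ℝ) ≤ |(n j : ℝ)| := le_trans h1 (hmax i0)
  have hnj : n j ≠ 0 := by
    intro hz; rw [hz] at h1j; norm_num at h1j
  refine ⟨j, hmax, le_antisymm ?_ ?_, hnj, h1j⟩
  · exact (pi_norm_le_iff_of_nonneg (abs_nonneg _)).2 fun i => by
      simpa [Real.norm_eq_abs] using hmax i
  · simpa [Real.norm_eq_abs] using norm_le_pi_norm (fun i => (n i : ℝ)) j

lemma finite_bounded {d : ℕ} (B : ℝ) :
    {n : Fin d → ℤ | ‖(fun i => ((n i : ℝ)))‖ ≤ B}.Finite := by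
  have hsub : {n : Fin d → ℤ | ‖(fun i => ((n i : ℝ)))‖ ≤ B}
      ⊆ Set.pi Set.univ (fun _ : Fin d => Set.Icc (-⌈B⌉) ⌈B⌉) := by
    intro n hn i _
    have h1 : |(n i : ℝ)| ≤ B := by
      simpa [Real.norm_eq_abs] using (norm_le_pi_norm (fun i => (n i : ℝ)) i).trans hn
    have h2 : |(n i : ℝ)| ≤ (⌈B⌉ : ℝ) := h1.trans (Int.le_ceil B)
    have h3 : |n i| ≤ ⌈B⌉ := by
      have : ((|n i| : ℤ) : ℝ) ≤ (⌈B⌉ : ℝ) := by rw [Int.cast_abs]; exact h2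
      exact_mod_cast this
    rw [abs_le] at h3
    simp only [Set.mem_Icc]
    exact h3
  exact Set.Finite.subset (Set.Finite.pi fun _ => Set.finite_Icc _ _) hsub

lemma infinite_of_forall_gt {S : Set ℕ} (h : ∀ a, ∃ b ∈ S, a < b) : S.Infinite := by
  intro hfin
  obtain ⟨a, ha⟩ := hfin.bddAbove
  obtain ⟨b, hb, hab⟩ := h a
  exact absurd (ha hb) (by omega)

lemma exists_lb {d : ℕ} (x : Fin d → ℝ)
    (hpos : ∀ q : ℕ, 0 < q → 0 < distInt (fun i => (q : ℝ) * x i)) (Q : ℕ) :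
    ∃ c > 0, ∀ q : ℕ, 0 < q → q ≤ Q → c ≤ distInt (fun i => (q : ℝ) * x i) := by
  induction Q with
  | zero => exact ⟨1, one_pos, fun q hq hq' => absurd (hq.trans_le hq') (lt_irrefl _)⟩
  | succ Q ih =>
    obtain ⟨c, hc, hcb⟩ := ih
    refine ⟨min c (distInt (fun i => ((Q + 1 : ℕ) : ℝ) * x i)),
      lt_min hc (hpos _ (Nat.succ_pos _)), fun q hq hq' => ?_⟩
    rcases Nat.lt_succ_iff_lt_or_eq.1 (Nat.lt_succ_of_le hq') with h | rfl
    · exact le_trans (min_le_left _ _) (hcb q hq (by omega))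
    · exact min_le_right _ _

open Filter in
set_option maxHeartbeats 2000000 in
lemma core {d : ℕ} (hd : 1 ≤ d) (x : Fin d → ℝ) (ω ω' : ℝ) (hω : 0 < ω) (hω' : 0 < ω')
    (hlt : ω' < ω / ((d : ℝ) ^ 2 + ((d : ℝ) - 1) * ω))
    (hinf : {n : Fin d → ℤ | n ≠ 0 ∧
      distZ (∑ i, (n i : ℝ) * x i) ≤ ‖fun i => ((n i : ℝ))‖ ^ (-((d : ℝ) + ω))}.Infinite) :
    {q : ℕ | 0 < q ∧
      distInt (fun i => (q : ℝ) * x i) ≤ (q : ℝ) ^ (-((1 + ω') / d))}.Infinite := by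
  classical
  by_cases hrat : ∃ q0 : ℕ, 0 < q0 ∧ ∀ i, ∃ z : ℤ, (q0 : ℝ) * x i = z
  · -- rational case
    obtain ⟨q0, hq0, hz⟩ := hrat
    choose z hzv using hz
    refine Set.infinite_of_injective_forall_mem (f := fun k : ℕ => (k + 1) * q0) ?_ ?_
    · intro k1 k2 h; simpa [Nat.mul_left_inj (by omega : q0 ≠ 0)] using h
    · intro k
      refine ⟨by positivity, ?_⟩
      show distInt (fun i => (((k + 1) * q0 : ℕ) : ℝ) * x i)
        ≤ (((k + 1) * q0 : ℕ) : ℝ) ^ (-((1 + ω') / (d : ℝ)))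
      set pz : Fin d → ℤ := fun i => (k + 1 : ℤ) * z i with hpz
      have hle := distInt_le (fun i => (((k + 1) * q0 : ℕ) : ℝ) * x i) pz
      have hzero : ((fun i => (((k + 1) * q0 : ℕ) : ℝ) * x i) - fun i => ((pz i : ℤ) : ℝ)) = 0 := by
        funext i
        simp only [Pi.sub_apply, Pi.zero_apply, hpz]
        push_cast
        nlinarith [hzv i]
      rw [hzero, norm_zero] at hle
      exact hle.trans (Real.rpow_nonneg (by positivity) _)
  · -- irrational case
    have hpos : ∀ q : ℕ, 0 < q → 0 < distInt (fun i => (q : ℝ) * x i) := by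
      intro q hq
      rcases lt_or_eq_of_le (distInt_nonneg (fun i => (q : ℝ) * x i)) with h | h
      · exact h
      exfalso
      apply hrat
      refine ⟨q, hq, fun i => ⟨round ((q : ℝ) * x i), ?_⟩⟩
      have := distInt_eq (fun i => (q : ℝ) * x i)
      rw [← h] at this
      have h0 := (norm_eq_zero.1 this.symm)
      have := congrFun h0 i
      simp only [Pi.sub_apply, Pi.zero_apply, sub_eq_zero] at this
      exact this
    -- main construction
    refine infinite_of_forall_gt fun Q₀ => ?_
    obtain ⟨c, hc, hcb⟩ := exists_lb x hpos Q₀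
    have hdR : (1 : ℝ) ≤ (d : ℝ) := by exact_mod_cast hd
    have hdR0 : (0 : ℝ) < (d : ℝ) := by linarith
    set e : ℝ := ((d : ℝ) + ω) / (d : ℝ) with he_def
    have he : 0 < e := by positivity
    set K : ℝ := 3 * 2 ^ (d - 1) with hK_def
    have h2pow : (1 : ℝ) ≤ 2 ^ (d - 1) := one_le_pow₀ (by norm_num)
    have hK3 : (3 : ℝ) ≤ K := by rw [hK_def]; nlinarith
    have hK0 : (0 : ℝ) < K := by linarith
    set β : ℝ := e * ((d : ℝ) - 1) + 1 with hβ_def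
    have hβ0 : 0 < β := by nlinarith
    set s : ℝ := (1 + ω') / (d : ℝ) with hs_def
    have hs0 : 0 < s := by positivity
    have hD : (0 : ℝ) < (d : ℝ) ^ 2 + ((d : ℝ) - 1) * ω := by nlinarith
    have h1 : ω' * ((d : ℝ) ^ 2 + ((d : ℝ) - 1) * ω) < ω := by
      have := (lt_div_iff₀ hD).1 hlt
      linarith
    have hβD : β = ((d : ℝ) ^ 2 + ((d : ℝ) - 1) * ω) / (d : ℝ) := by
      rw [hβ_def, he_def]; field_simp; ring
    have hγ : β * s < e := by
      rw [hβD, hs_def, he_def, div_mul_div_comm, div_lt_div_iff₀ (by positivity) hdR0]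
      nlinarith
    clear_value e K β s
    have tend : ∀ C u : ℝ, 0 < u →
        Filter.Tendsto (fun X : ℝ => C * X ^ (-u)) Filter.atTop (nhds 0) := by
      intro C u hu
      simpa using (tendsto_rpow_neg_atTop hu).const_mul C
    have E1 : ∀ᶠ X : ℝ in Filter.atTop, K * X ^ (-(ω / (d : ℝ))) < 1 / 2 :=
      (tend K _ (by positivity)).eventually_lt_const (by norm_num)
    have E2 : ∀ᶠ X : ℝ in Filter.atTop,
        ((d : ℝ) + K) * X ^ (-e) * (K * X ^ β) ^ s ≤ 1 := by
      have h0 := (tend (((d : ℝ) + K) * K ^ s) (e - β * s) (by linarith)).eventually_le_const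
        one_pos
      filter_upwards [h0, Filter.eventually_ge_atTop (1 : ℝ)] with X hX1 hX2
      have hX0 : (0 : ℝ) < X := lt_of_lt_of_le one_pos hX2
      have hexp : ((d : ℝ) + K) * X ^ (-e) * (K * X ^ β) ^ s
          = (((d : ℝ) + K) * K ^ s) * X ^ (-(e - β * s)) := by
        rw [Real.mul_rpow hK0.le (Real.rpow_nonneg hX0.le _),
          ← Real.rpow_mul hX0.le, show -(e - β * s) = -e + β * s by ring,
          Real.rpow_add hX0]
        ring
      rw [hexp]
      exact hX1
    have E3 : ∀ᶠ X : ℝ in Filter.atTop, ((d : ℝ) + K) * X ^ (-e) < c :=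
      (tend _ _ he).eventually_lt_const hc
    obtain ⟨X₀, hX₀⟩ := Filter.eventually_atTop.1 ((E1.and E2).and E3)
    obtain ⟨n, hnmem⟩ := (hinf.diff (finite_bounded (max X₀ 1))).nonempty
    obtain ⟨⟨hn0, hnd⟩, hnb⟩ := hnmem
    simp only [Set.mem_setOf_eq, not_le] at hnb
    set X : ℝ := ‖fun i => ((n i : ℝ))‖ with hX_def
    have hXgt : max X₀ 1 < X := hnb
    have hX1 : (1 : ℝ) ≤ X := le_of_lt (lt_of_le_of_lt (le_max_right _ _) hXgt)
    have hX0 : (0 : ℝ) < X := lt_of_lt_of_le one_pos hX1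
    obtain ⟨⟨C1, C2⟩, C3⟩ := hX₀ X (le_of_lt (lt_of_le_of_lt (le_max_left _ _) hXgt))
    clear_value X
    obtain ⟨j, hmax, hnorm, hnj, h1j⟩ := exists_max_coord hd n hn0
    have hnormX : X = |(n j : ℝ)| := by rw [hX_def]; exact hnorm
    set δ : ℝ := X ^ (-e) with hδ_def
    have hδ0 : 0 < δ := Real.rpow_pos_of_pos hX0 _
    have hδ1 : δ ≤ 1 := Real.rpow_le_one_of_one_le_of_nonpos hX1 (neg_nonpos.2 he.le)
    clear_value δ
    set m : ℕ := ⌈1 / δ⌉₊ with hm_def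
    set M : ℕ := ⌈2 * X⌉₊ with hM_def
    have hm : 0 < m := Nat.ceil_pos.2 (by positivity)
    have hM : 0 < M := Nat.ceil_pos.2 (by positivity)
    have hm' : (0 : ℝ) < m := by exact_mod_cast hm
    have hM' : (0 : ℝ) < M := by exact_mod_cast hM
    clear_value m M
    obtain ⟨q, p, hq1, hqN, hcoord, hsec⟩ := pigeon x n j hnj m M hm hM
    -- basic bounds
    have hmδ : 1 / (m : ℝ) ≤ δ := by
      have h' := Nat.le_ceil (1 / δ)
      rw [← hm_def] at h'
      rw [div_le_iff₀ hm']
      have h2 := mul_le_mul_of_nonneg_left h' hδ0.le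
      rw [mul_one_div, div_self hδ0.ne'] at h2
      calc (1 : ℝ) = δ * (1 / δ) := by field_simp
        _ ≤ δ * m := by
            apply mul_le_mul_of_nonneg_left _ hδ0.le
            exact_mod_cast h'
    have hmub : (m : ℝ) ≤ 2 / δ := by
      have h' := Nat.ceil_lt_add_one (by positivity : (0:ℝ) ≤ 1 / δ)
      have h1δ : (1 : ℝ) ≤ 1 / δ := by
        rw [le_div_iff₀ hδ0]; linarith
      rw [hm_def]
      have : (2 : ℝ) / δ = 1 / δ + 1 / δ := by ring
      rw [this]
      linarith
    have hMlb : 2 * X ≤ (M : ℝ) := by rw [hM_def]; exact Nat.le_ceil _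
    have hMub : (M : ℝ) ≤ 3 * X := by
      have h' := Nat.ceil_lt_add_one (by positivity : (0:ℝ) ≤ 2 * X)
      rw [hM_def]; linarith
    have hXM : X / (M : ℝ) ≤ 1 / 2 := by
      rw [div_le_iff₀ hM']; linarith
    have hcast : ((d - 1 : ℕ) : ℝ) = (d : ℝ) - 1 := by
      push_cast [Nat.cast_sub hd]; ring
    have hδpow : δ ^ (d - 1) = X ^ (-e * ((d : ℝ) - 1)) := by
      rw [hδ_def, ← Real.rpow_natCast (X ^ (-e)) (d - 1), ← Real.rpow_mul hX0.le, hcast]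
    have hNub : ((m ^ (d - 1) * M : ℕ) : ℝ) ≤ K * X ^ β := by
      push_cast
      calc (m : ℝ) ^ (d - 1) * (M : ℝ) ≤ (2 / δ) ^ (d - 1) * (3 * X) := by
            apply mul_le_mul (pow_le_pow_left₀ hm'.le hmub _) hMub hM'.le (by positivity)
        _ = K * X ^ β := by
            rw [div_pow, hδpow, hK_def, hβ_def,
              show e * ((d : ℝ) - 1) + 1 = -(-e * ((d : ℝ) - 1)) + 1 by ring,
              Real.rpow_add hX0, Real.rpow_neg hX0.le, Real.rpow_one]
            field_simp
    have hqR : (q : ℝ) ≤ K * X ^ β := le_trans (by exact_mod_cast hqN) hNub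
    have hq0' : (0 : ℝ) < q := by exact_mod_cast hq1
    -- the small linear form
    set S : ℝ := ∑ i, (n i : ℝ) * x i with hS_def
    set b : ℤ := round S with hb_def
    set L : ℝ := S - b with hL_def
    have hε : |L| ≤ X ^ (-((d : ℝ) + ω)) := by
      rw [hL_def, ← distZ_eq S]
      exact hnd
    have hexpid : β + -((d : ℝ) + ω) = -(ω / (d : ℝ)) := by
      rw [hβ_def, he_def]; field_simp; ring
    have hqL : |(q : ℝ) * L| ≤ K * X ^ (-(ω / (d : ℝ))) := by
      rw [abs_mul, abs_of_pos hq0']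
      calc (q : ℝ) * |L| ≤ (K * X ^ β) * X ^ (-((d : ℝ) + ω)) :=
            mul_le_mul hqR hε (abs_nonneg _) (by positivity)
        _ = K * X ^ (-(ω / (d : ℝ))) := by
            rw [mul_assoc, ← Real.rpow_add hX0, hexpid]
    have hsec2 : |(q : ℝ) * S - ∑ i, (n i : ℝ) * p i| ≤ 1 / 2 := by
      refine hsec.trans ?_
      rw [← hnormX]
      exact hXM
    clear_value S b L
    set r : ℤ := q * b - ∑ i, n i * p i with hr_def
    have hrcast : (r : ℝ) = (q : ℝ) * (b : ℝ) - ∑ i, (n i : ℝ) * (p i : ℝ) := by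
      rw [hr_def]; push_cast; ring
    have hhr : (q : ℝ) * S - ∑ i, (n i : ℝ) * p i = (q : ℝ) * L + r := by
      rw [hrcast, hL_def]; ring
    have hr0 : r = 0 := by
      have habs : |(r : ℝ)| < 1 := by
        have : (r : ℝ) = ((q : ℝ) * S - ∑ i, (n i : ℝ) * p i) - (q : ℝ) * L := by
          rw [hhr]; ring
        rw [this]
        calc |((q : ℝ) * S - ∑ i, (n i : ℝ) * p i) - (q : ℝ) * L|
            ≤ |(q : ℝ) * S - ∑ i, (n i : ℝ) * p i| + |(q : ℝ) * L| := abs_sub _ _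
          _ < 1 := by linarith
      have habs' : |r| < 1 := by exact_mod_cast (by push_cast; exact habs : |((r : ℤ) : ℝ)| < 1)
      exact Int.abs_lt_one_iff.1 habs'
    have hh2 : |(q : ℝ) * S - ∑ i, (n i : ℝ) * p i| ≤ K * X ^ (-(ω / (d : ℝ))) := by
      rw [hhr, hr0]
      push_cast
      rw [add_zero]
      exact hqL
    -- coordinate j bound
    have htot : ∑ i, (n i : ℝ) * ((q : ℝ) * x i - p i)
        = (q : ℝ) * S - ∑ i, (n i : ℝ) * p i := by
      rw [hS_def, Finset.mul_sum, ← Finset.sum_sub_distrib]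
      exact Finset.sum_congr rfl fun i _ => by ring
    have hsplit : ∑ i, (n i : ℝ) * ((q : ℝ) * x i - p i)
        = (∑ i ∈ Finset.univ.erase j, (n i : ℝ) * ((q : ℝ) * x i - p i))
          + (n j : ℝ) * ((q : ℝ) * x j - p j) :=
      (Finset.sum_erase_add _ _ (Finset.mem_univ j)).symm
    have herase : |∑ i ∈ Finset.univ.erase j, (n i : ℝ) * ((q : ℝ) * x i - p i)|
        ≤ ((d : ℝ) - 1) * (X * δ) := by
      calc |∑ i ∈ Finset.univ.erase j, (n i : ℝ) * ((q : ℝ) * x i - p i)|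
          ≤ ∑ i ∈ Finset.univ.erase j, |(n i : ℝ) * ((q : ℝ) * x i - p i)| :=
            Finset.abs_sum_le_sum_abs _ _
        _ ≤ ∑ _i ∈ Finset.univ.erase j, X * δ := by
            refine Finset.sum_le_sum fun i hi => ?_
            rw [abs_mul]
            have hi1 : |(n i : ℝ)| ≤ X := by rw [hnormX]; exact hmax i
            have hi2 : |(q : ℝ) * x i - p i| ≤ δ :=
              le_trans (hcoord i (Finset.mem_erase.1 hi).1) hmδ
            exact mul_le_mul hi1 hi2 (abs_nonneg _) hX0.le
        _ = ((d : ℝ) - 1) * (X * δ) := by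
            rw [Finset.sum_const, nsmul_eq_mul, Finset.card_erase_of_mem (Finset.mem_univ j),
              Finset.card_univ, Fintype.card_fin, hcast]
    have hXδ : X * δ = X ^ (-(ω / (d : ℝ))) := by
      rw [hδ_def, show X * X ^ (-e) = X ^ (1 : ℝ) * X ^ (-e) by rw [Real.rpow_one],
        ← Real.rpow_add hX0]
      congr 1
      rw [he_def]
      field_simp
      ring
    have hj2 : |(q : ℝ) * x j - p j| ≤ (K + ((d : ℝ) - 1)) * δ := by
      have h5 : |(n j : ℝ)| * |(q : ℝ) * x j - p j|
          ≤ K * X ^ (-(ω / (d : ℝ))) + ((d : ℝ) - 1) * (X * δ) := by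
        rw [← abs_mul]
        have hidj : (n j : ℝ) * ((q : ℝ) * x j - p j)
            = ((q : ℝ) * S - ∑ i, (n i : ℝ) * p i)
              - ∑ i ∈ Finset.univ.erase j, (n i : ℝ) * ((q : ℝ) * x i - p i) := by
          rw [← htot, hsplit]; ring
        rw [hidj]
        exact (abs_sub _ _).trans (add_le_add hh2 herase)
      have h6 : X * |(q : ℝ) * x j - p j| ≤ X * ((K + ((d : ℝ) - 1)) * δ) := by
        rw [← hnormX] at h5
        calc X * |(q : ℝ) * x j - p j| ≤ K * X ^ (-(ω / (d : ℝ))) + ((d : ℝ) - 1) * (X * δ) := h5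
          _ = X * ((K + ((d : ℝ) - 1)) * δ) := by rw [← hXδ]; ring
      exact le_of_mul_le_mul_left h6 hX0
    -- final distance bound
    have hdist : distInt (fun i => (q : ℝ) * x i) ≤ ((d : ℝ) + K) * δ := by
      refine (distInt_le _ p).trans ?_
      have hB : (0:ℝ) ≤ ((d : ℝ) + K) * δ := mul_nonneg (by linarith) hδ0.le
      refine (pi_norm_le_iff_of_nonneg hB).2 fun i => ?_
      simp only [Pi.sub_apply, Real.norm_eq_abs]
      by_cases hij : i = j
      · subst hij
        calc |(q : ℝ) * x i - p i| ≤ (K + ((d : ℝ) - 1)) * δ := hj2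
          _ ≤ ((d : ℝ) + K) * δ :=
            mul_le_mul_of_nonneg_right (by linarith) hδ0.le
      · calc |(q : ℝ) * x i - p i| ≤ δ := le_trans (hcoord i hij) hmδ
          _ ≤ ((d : ℝ) + K) * δ := le_mul_of_one_le_left hδ0.le (by linarith)
    have hdc : distInt (fun i => (q : ℝ) * x i) < c := hdist.trans_lt C3
    have hqQ : Q₀ < q := by
      by_contra hle
      push_neg at hle
      exact absurd (hcb q hq1 hle) (not_le.2 hdc)
    refine ⟨q, ⟨hq1, ?_⟩, hqQ⟩
    have hKXβ : (0 : ℝ) < K * X ^ β := mul_pos hK0 (Real.rpow_pos_of_pos hX0 _)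
    have hP : (0 : ℝ) < (K * X ^ β) ^ s := Real.rpow_pos_of_pos hKXβ _
    have step1 : ((d : ℝ) + K) * δ ≤ (K * X ^ β) ^ (-s) := by
      rw [Real.rpow_neg hKXβ.le, ← one_div]
      rw [le_div_iff₀ hP]
      exact C2
    have step2 : (K * X ^ β) ^ (-s) ≤ (q : ℝ) ^ (-s) :=
      Real.rpow_le_rpow_of_nonpos hq0' hqR (neg_nonpos.2 hs0.le)
    have final : distInt (fun i => (q : ℝ) * x i) ≤ (q : ℝ) ^ (-s) :=
      hdist.trans (step1.trans step2)
    exact final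

theorem stmt_8 (d : ℕ) (hd : 1 ≤ d) (x : Fin d → ℝ) (h : 0 < omegaD x) :
    0 < omegaS x ∧
      omegaD x / ((d : ℝ≥0∞) ^ 2 + ((d : ℝ≥0∞) - 1) * omegaD x) ≤ omegaS x := by
  classical
  have hdR : (1 : ℝ) ≤ (d : ℝ) := by exact_mod_cast hd
  have hDen : ∀ t : ℝ, 0 < t → 0 < (d : ℝ) ^ 2 + ((d : ℝ) - 1) * t := by
    intro t ht; nlinarith
  have key : ∀ ω₀ : ℝ, (0 < ω₀ ∧
      {n : Fin d → ℤ | n ≠ 0 ∧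
        distZ (∑ i, (n i : ℝ) * x i) ≤ ‖fun i => ((n i : ℝ))‖ ^ (-((d : ℝ) + ω₀))}.Infinite) →
      ∀ ω' : ℝ, 0 < ω' → ω' < ω₀ / ((d : ℝ) ^ 2 + ((d : ℝ) - 1) * ω₀) →
      ENNReal.ofReal ω' ≤ omegaS x := by
    intro ω₀ hmem ω' h1 h2
    have hS := core hd x ω₀ ω' hmem.1 h1 h2 hmem.2
    rw [omegaS]
    exact le_iSup₂ (f := fun (ω : ℝ) (_ : ω ∈ {ω : ℝ | 0 < ω ∧
      {q : ℕ | 0 < q ∧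
        distInt (fun i => (q : ℝ) * x i) ≤ (q : ℝ) ^ (-((1 + ω) / d))}.Infinite}) =>
      ENNReal.ofReal ω) ω' ⟨h1, hS⟩
  have hex : ∀ z : ℝ≥0∞, z < omegaD x → ∃ ω₀ : ℝ, (0 < ω₀ ∧
      {n : Fin d → ℤ | n ≠ 0 ∧
        distZ (∑ i, (n i : ℝ) * x i) ≤ ‖fun i => ((n i : ℝ))‖ ^ (-((d : ℝ) + ω₀))}.Infinite)
      ∧ z < ENNReal.ofReal ω₀ := by
    intro z hz
    rw [omegaD] at hz
    obtain ⟨ω₀, h0⟩ := lt_iSup_iff.1 hz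
    obtain ⟨hmem, h1⟩ := lt_iSup_iff.1 h0
    exact ⟨ω₀, hmem, h1⟩
  obtain ⟨ω₁, hω₁, -⟩ := hex 0 h
  have hg1 : 0 < ω₁ / ((d : ℝ) ^ 2 + ((d : ℝ) - 1) * ω₁) := div_pos hω₁.1 (hDen _ hω₁.1)
  have hpos : 0 < omegaS x := by
    calc (0 : ℝ≥0∞) < ENNReal.ofReal (ω₁ / ((d : ℝ) ^ 2 + ((d : ℝ) - 1) * ω₁) / 2) :=
          ENNReal.ofReal_pos.2 (by positivity)
      _ ≤ omegaS x := key ω₁ hω₁ _ (by positivity) (by linarith)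
  refine ⟨hpos, ?_⟩
  refine ENNReal.le_of_forall_nnreal_lt fun r hr => ?_
  have hr0 : (0 : ℝ) ≤ (r : ℝ) := r.coe_nonneg
  by_cases htop : omegaD x = ⊤
  · rcases eq_or_lt_of_le hd with hd1 | hd2
    · -- d = 1
      have hd1' : d = 1 := hd1.symm
      subst hd1'
      obtain ⟨ω₀, hmem, hbig⟩ := hex ((r : ℝ≥0∞))
        (htop ▸ ENNReal.coe_lt_top : (r : ℝ≥0∞) < omegaD x)
      have hrR : ((r : ℝ)) < ω₀ :=
        (ENNReal.ofReal_lt_ofReal_iff_of_nonneg hr0).1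
          (by rwa [ENNReal.ofReal_coe_nnreal])
      have hsimp : ((1 : ℕ) : ℝ) ^ 2 + (((1 : ℕ) : ℝ) - 1) * ω₀ = 1 := by norm_num
      calc (r : ℝ≥0∞) = ENNReal.ofReal (r : ℝ) := (ENNReal.ofReal_coe_nnreal).symm
        _ ≤ ENNReal.ofReal (((r : ℝ) + ω₀) / 2) := ENNReal.ofReal_le_ofReal (by linarith)
        _ ≤ omegaS x := key ω₀ hmem _ (by linarith) (by rw [hsimp, div_one]; linarith)
    · -- d ≥ 2
      exfalso
      have hden : ((d : ℝ≥0∞) ^ 2 + ((d : ℝ≥0∞) - 1) * omegaD x) = ⊤ := by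
        rw [htop]
        have hne : ((d : ℝ≥0∞) - 1) ≠ 0 := by
          rw [← Nat.cast_one, ← ENNReal.natCast_sub]
          have : d - 1 ≠ 0 := by omega
          exact_mod_cast this
        rw [ENNReal.mul_top hne]
        simp
      rw [hden, ENNReal.div_top] at hr
      simp at hr
  · -- finite case
    set a : ℝ := (omegaD x).toReal with ha_def
    have haA : ENNReal.ofReal a = omegaD x := ENNReal.ofReal_toReal htop
    have ha0 : 0 < a := ENNReal.toReal_pos h.ne' htop
    have hDen' : 0 < (d : ℝ) ^ 2 + ((d : ℝ) - 1) * a := hDen a ha0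
    have hden_eq : ((d : ℝ≥0∞) ^ 2 + ((d : ℝ≥0∞) - 1) * ENNReal.ofReal a)
        = ENNReal.ofReal ((d : ℝ) ^ 2 + ((d : ℝ) - 1) * a) := by
      rw [ENNReal.ofReal_add (by positivity) (mul_nonneg (by linarith) ha0.le),
        ENNReal.ofReal_pow (by positivity), ENNReal.ofReal_natCast,
        ENNReal.ofReal_mul (by linarith),
        show (d : ℝ) - 1 = ((d - 1 : ℕ) : ℝ) by push_cast [Nat.cast_sub hd]; ring,
        ENNReal.ofReal_natCast, ENNReal.natCast_sub, Nat.cast_one]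
    have hfr : omegaD x / ((d : ℝ≥0∞) ^ 2 + ((d : ℝ≥0∞) - 1) * omegaD x)
        = ENNReal.ofReal (a / ((d : ℝ) ^ 2 + ((d : ℝ) - 1) * a)) := by
      rw [← haA, hden_eq, ← ENNReal.ofReal_div_of_pos hDen']
    rw [hfr] at hr
    have hga : 0 < a / ((d : ℝ) ^ 2 + ((d : ℝ) - 1) * a) := div_pos ha0 hDen'
    have hr' : (r : ℝ) < a / ((d : ℝ) ^ 2 + ((d : ℝ) - 1) * a) :=
      (ENNReal.ofReal_lt_ofReal_iff_of_nonneg hr0).1 (by rwa [ENNReal.ofReal_coe_nnreal])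
    set g : ℝ := a / ((d : ℝ) ^ 2 + ((d : ℝ) - 1) * a) with hg_def
    set θ : ℝ := ((r : ℝ) / g + 1) / 2 with hθ_def
    have hθlt1 : (r : ℝ) / g < 1 := (div_lt_one hga).2 hr'
    have hθge : (0 : ℝ) ≤ (r : ℝ) / g := by positivity
    have hθ0 : 0 < θ := by rw [hθ_def]; linarith
    have hθ1 : θ < 1 := by rw [hθ_def]; linarith
    have hθgt : (r : ℝ) / g < θ := by rw [hθ_def]; linarith
    set a₀ : ℝ := a * θ with ha₀_def
    have ha₀0 : 0 < a₀ := mul_pos ha0 hθ0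
    have ha₀a : a₀ < a := by
      rw [ha₀_def]; nlinarith
    have hDen₀ : 0 < (d : ℝ) ^ 2 + ((d : ℝ) - 1) * a₀ := hDen a₀ ha₀0
    have hga₀ : (r : ℝ) < a₀ / ((d : ℝ) ^ 2 + ((d : ℝ) - 1) * a₀) := by
      have step1 : (r : ℝ) < θ * g := by
        calc (r : ℝ) = ((r : ℝ) / g) * g := by field_simp
          _ < θ * g := by exact mul_lt_mul_of_pos_right hθgt hga
      have step2 : θ * g ≤ a₀ / ((d : ℝ) ^ 2 + ((d : ℝ) - 1) * a₀) := by
        rw [hg_def, mul_div_assoc', div_le_div_iff₀ hDen' hDen₀, ha₀_def]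
        nlinarith [mul_nonneg (mul_nonneg (mul_nonneg
          (by linarith : (0:ℝ) ≤ (d : ℝ) - 1) (mul_self_nonneg a)) hθ0.le)
          (by linarith : (0:ℝ) ≤ 1 - θ)]
      linarith
    obtain ⟨ω₀, hmem, hbig⟩ := hex (ENNReal.ofReal a₀) (by
      rw [← haA]
      exact (ENNReal.ofReal_lt_ofReal_iff ha0).2 ha₀a)
    have hω₀gt : a₀ < ω₀ := (ENNReal.ofReal_lt_ofReal_iff_of_nonneg ha₀0.le).1 hbig
    have hmono : a₀ / ((d : ℝ) ^ 2 + ((d : ℝ) - 1) * a₀)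
        ≤ ω₀ / ((d : ℝ) ^ 2 + ((d : ℝ) - 1) * ω₀) := by
      rw [div_le_div_iff₀ hDen₀ (hDen _ hmem.1)]
      have hint : a₀ * (d : ℝ) ^ 2 ≤ ω₀ * (d : ℝ) ^ 2 :=
        mul_le_mul_of_nonneg_right hω₀gt.le (sq_nonneg _)
      nlinarith
    have hrg : (r : ℝ) < ω₀ / ((d : ℝ) ^ 2 + ((d : ℝ) - 1) * ω₀) := lt_of_lt_of_le hga₀ hmono
    calc (r : ℝ≥0∞) = ENNReal.ofReal (r : ℝ) := (ENNReal.ofReal_coe_nnreal).symm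
      _ ≤ ENNReal.ofReal (((r : ℝ) + ω₀ / ((d : ℝ) ^ 2 + ((d : ℝ) - 1) * ω₀)) / 2) :=
          ENNReal.ofReal_le_ofReal (by linarith)
      _ ≤ omegaS x := key ω₀ hmem _ (by linarith) (by linarith)
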